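/- Over an algebraically closed field k, every nonzero quadratic relation f ∈ k⟨x,y⟩ of degree 2 can be written uniquely as f = x·τ(x) + y·τ(y) for a nonzero linear map τ : kx + ky → kx + ky, and two such algebras k⟨x,y⟩/(x·τ(x)+y·τ(y)) and k⟨x,y⟩/(x·τ'(x)+y·τ'(y)) are isomorphic as graded algebras if and only if the 2×2 matrices B, B' representing τ, τ' are congruent (B' = CᵗBC for some invertible C). -/

import Mathlib

/-- The quadratic element `f = x·τ(x) + y·τ(y)` of the free algebra `k⟨x,y⟩`
associated to the matrix `B` of the linear map `τ` (so `τ(x) = b₁₁x + b₁₂y`,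
`τ(y) = b₂₁x + b₂₂y`); `false` plays the role of `x` and `true` that of `y`. -/
noncomputable def quadRelElt {k : Type*} [CommRing k]
    (B : Matrix (Fin 2) (Fin 2) k) : FreeAlgebra k Bool :=
  FreeAlgebra.ι k false *
      (B 0 0 • FreeAlgebra.ι k false + B 0 1 • FreeAlgebra.ι k true) +
    FreeAlgebra.ι k true *
      (B 1 0 • FreeAlgebra.ι k false + B 1 1 • FreeAlgebra.ι k true)

/-- The relation `x·τ(x) + y·τ(y) = 0` defining the algebra `A(τ) = k⟨x,y⟩/(f)`. -/
inductive QuadRel (k : Type*) [CommRing k] (B : Matrix (Fin 2) (Fin 2) k) :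
    FreeAlgebra k Bool → FreeAlgebra k Bool → Prop
  | rel : QuadRel k B (quadRelElt B) 0

/-- Truncated algebra k ⊕ k² ⊕ k·z, with v·v' pairing given by the bilinear form `L`. -/
structure Tr (k : Type*) (L : Matrix (Fin 2) (Fin 2) k) where
  a : k
  b : k
  c : k
  d : k

namespace Tr

variable {k : Type*} [CommRing k] {L : Matrix (Fin 2) (Fin 2) k}

@[ext] theorem ext' {p q : Tr k L} (h1 : p.a = q.a) (h2 : p.b = q.b) (h3 : p.c = q.c)
    (h4 : p.d = q.d) : p = q := by cases p; cases q; simp_all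

instance : Add (Tr k L) := ⟨fun p q => ⟨p.a + q.a, p.b + q.b, p.c + q.c, p.d + q.d⟩⟩
instance : Neg (Tr k L) := ⟨fun p => ⟨-p.a, -p.b, -p.c, -p.d⟩⟩
instance : Zero (Tr k L) := ⟨⟨0, 0, 0, 0⟩⟩
instance : One (Tr k L) := ⟨⟨1, 0, 0, 0⟩⟩
instance : Mul (Tr k L) :=
  ⟨fun p q => ⟨p.a * q.a, p.a * q.b + p.b * q.a, p.a * q.c + p.c * q.a,
    p.a * q.d + p.d * q.a + L 0 0 * (p.b * q.b) + L 0 1 * (p.b * q.c)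
      + L 1 0 * (p.c * q.b) + L 1 1 * (p.c * q.c)⟩⟩

@[simp] theorem add_a (p q : Tr k L) : (p + q).a = p.a + q.a := rfl
@[simp] theorem add_b (p q : Tr k L) : (p + q).b = p.b + q.b := rfl
@[simp] theorem add_c (p q : Tr k L) : (p + q).c = p.c + q.c := rfl
@[simp] theorem add_d (p q : Tr k L) : (p + q).d = p.d + q.d := rfl
@[simp] theorem neg_a (p : Tr k L) : (-p).a = -p.a := rfl
@[simp] theorem neg_b (p : Tr k L) : (-p).b = -p.b := rfl
@[simp] theorem neg_c (p : Tr k L) : (-p).c = -p.c := rfl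
@[simp] theorem neg_d (p : Tr k L) : (-p).d = -p.d := rfl
@[simp] theorem zero_a : (0 : Tr k L).a = 0 := rfl
@[simp] theorem zero_b : (0 : Tr k L).b = 0 := rfl
@[simp] theorem zero_c : (0 : Tr k L).c = 0 := rfl
@[simp] theorem zero_d : (0 : Tr k L).d = 0 := rfl
@[simp] theorem one_a : (1 : Tr k L).a = 1 := rfl
@[simp] theorem one_b : (1 : Tr k L).b = 0 := rfl
@[simp] theorem one_c : (1 : Tr k L).c = 0 := rfl
@[simp] theorem one_d : (1 : Tr k L).d = 0 := rfl
@[simp] theorem mul_a (p q : Tr k L) : (p * q).a = p.a * q.a := rfl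
@[simp] theorem mul_b (p q : Tr k L) : (p * q).b = p.a * q.b + p.b * q.a := rfl
@[simp] theorem mul_c (p q : Tr k L) : (p * q).c = p.a * q.c + p.c * q.a := rfl
@[simp] theorem mul_d (p q : Tr k L) : (p * q).d = p.a * q.d + p.d * q.a
    + L 0 0 * (p.b * q.b) + L 0 1 * (p.b * q.c) + L 1 0 * (p.c * q.b)
    + L 1 1 * (p.c * q.c) := rfl

instance : AddCommGroup (Tr k L) where
  add_assoc p q r := by ext <;> simp <;> ring
  zero_add p := by ext <;> simp
  add_zero p := by ext <;> simp
  add_comm p q := by ext <;> simp <;> ring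
  neg_add_cancel p := by ext <;> simp
  nsmul := nsmulRec
  zsmul := zsmulRec

instance : Ring (Tr k L) where
  __ := (inferInstance : AddCommGroup (Tr k L))
  mul_assoc p q r := by ext <;> simp <;> ring
  one_mul p := by ext <;> simp
  mul_one p := by ext <;> simp
  left_distrib p q r := by ext <;> simp <;> ring
  right_distrib p q r := by ext <;> simp <;> ring
  zero_mul p := by ext <;> simp
  mul_zero p := by ext <;> simp

/-- scalar inclusion -/
def ofk : k →+* Tr k L where
  toFun a := ⟨a, 0, 0, 0⟩
  map_one' := rfl
  map_mul' a b := by ext <;> simp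
  map_zero' := rfl
  map_add' a b := by ext <;> simp

instance : SMul k (Tr k L) := ⟨fun r p => ⟨r * p.a, r * p.b, r * p.c, r * p.d⟩⟩

instance : Algebra k (Tr k L) where
  algebraMap := ofk
  commutes' := by intro r p; ext <;> simp [ofk] <;> ring
  smul_def' := by intro r p; ext <;> simp [ofk] <;> rfl

@[simp] theorem smul_a (r : k) (p : Tr k L) : (r • p).a = r * p.a := rfl
@[simp] theorem smul_b (r : k) (p : Tr k L) : (r • p).b = r * p.b := rfl
@[simp] theorem smul_c (r : k) (p : Tr k L) : (r • p).c = r * p.c := rfl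
@[simp] theorem smul_d (r : k) (p : Tr k L) : (r • p).d = r * p.d := rfl

@[simp] theorem algebraMap_apply (r : k) :
    (algebraMap k (Tr k L)) r = (⟨r, 0, 0, 0⟩ : Tr k L) := rfl

/-- the generators -/
def gen : Bool → Tr k L
  | false => ⟨0, 1, 0, 0⟩
  | true => ⟨0, 0, 1, 0⟩

/-- the evaluation homomorphism -/
noncomputable def ev (L : Matrix (Fin 2) (Fin 2) k) : FreeAlgebra k Bool →ₐ[k] Tr k L :=
  FreeAlgebra.lift k gen

@[simp] theorem ev_ι (s : Bool) : ev L (FreeAlgebra.ι k s) = gen s := by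
  simp [ev]

end Tr
section
variable {k : Type*} [CommRing k]

theorem quad_eq (B : Matrix (Fin 2) (Fin 2) k) :
    quadRelElt B =
      B 0 0 • (FreeAlgebra.ι k false * FreeAlgebra.ι k false) +
      B 0 1 • (FreeAlgebra.ι k false * FreeAlgebra.ι k true) +
      B 1 0 • (FreeAlgebra.ι k true * FreeAlgebra.ι k false) +
      B 1 1 • (FreeAlgebra.ι k true * FreeAlgebra.ι k true) := by
  simp only [quadRelElt, mul_add, mul_smul_comm]
  abel

theorem quad_add (B B' : Matrix (Fin 2) (Fin 2) k) :
    quadRelElt (B + B') = quadRelElt B + quadRelElt B' := by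
  simp only [quad_eq, Matrix.add_apply]
  module

theorem quad_smul (r : k) (B : Matrix (Fin 2) (Fin 2) k) :
    quadRelElt (r • B) = r • quadRelElt B := by
  simp only [quad_eq, Matrix.smul_apply, smul_eq_mul]
  module

theorem quad_zero : quadRelElt (0 : Matrix (Fin 2) (Fin 2) k) = 0 := by
  simp [quad_eq]

end

section
variable {k : Type*} [CommRing k]

theorem ev_quad (L B : Matrix (Fin 2) (Fin 2) k) :
    Tr.ev L (quadRelElt B) =
      ⟨0, 0, 0, B 0 0 * L 0 0 + B 0 1 * L 0 1 + B 1 0 * L 1 0 + B 1 1 * L 1 1⟩ := by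
  simp only [quad_eq, map_add, map_smul, map_mul, Tr.ev_ι]
  ext <;> simp [Tr.gen] <;> ring

end

section
variable {k : Type*} [CommRing k]

theorem quad_inj {B B' : Matrix (Fin 2) (Fin 2) k} (h : quadRelElt B = quadRelElt B') :
    B = B' := by
  have key : ∀ L : Matrix (Fin 2) (Fin 2) k,
      B 0 0 * L 0 0 + B 0 1 * L 0 1 + B 1 0 * L 1 0 + B 1 1 * L 1 1 =
      B' 0 0 * L 0 0 + B' 0 1 * L 0 1 + B' 1 0 * L 1 0 + B' 1 1 * L 1 1 := by
    intro L
    have := congrArg Tr.d (congrArg (Tr.ev L) h)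
    rwa [ev_quad, ev_quad] at this
  ext i j
  fin_cases i <;> fin_cases j
  · simpa using key !![1,0;0,0]
  · simpa using key !![0,1;0,0]
  · simpa using key !![0,0;1,0]
  · simpa using key !![0,0;0,1]

theorem exists_quad {f : FreeAlgebra k Bool}
    (hf : f ∈ Submodule.span k {w : FreeAlgebra k Bool | ∃ s t : Bool,
      w = FreeAlgebra.ι k s * FreeAlgebra.ι k t}) :
    ∃ B : Matrix (Fin 2) (Fin 2) k, quadRelElt B = f := by
  induction hf using Submodule.span_induction with
  | mem w hw =>
    obtain ⟨s, t, rfl⟩ := hw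
    cases s <;> cases t
    · exact ⟨!![1,0;0,0], by simp [quad_eq]⟩
    · exact ⟨!![0,1;0,0], by simp [quad_eq]⟩
    · exact ⟨!![0,0;1,0], by simp [quad_eq]⟩
    · exact ⟨!![0,0;0,1], by simp [quad_eq]⟩
  | zero => exact ⟨0, quad_zero⟩
  | add x y _ _ hx hy =>
    obtain ⟨B1, rfl⟩ := hx; obtain ⟨B2, rfl⟩ := hy
    exact ⟨B1 + B2, quad_add B1 B2⟩
  | smul r x _ hx =>
    obtain ⟨B1, rfl⟩ := hx
    exact ⟨r • B1, quad_smul r B1⟩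

variable (B : Matrix (Fin 2) (Fin 2) k)

theorem quot_rel : RingQuot.mkAlgHom k (QuadRel k B) (quadRelElt B) = 0 := by
  have := RingQuot.mkAlgHom_rel k (QuadRel.rel (k := k) (B := B))
  simpa using this

/-- evaluation on the quotient, given that `L` annihilates `B` -/
noncomputable def qev (L : Matrix (Fin 2) (Fin 2) k)
    (h : B 0 0 * L 0 0 + B 0 1 * L 0 1 + B 1 0 * L 1 0 + B 1 1 * L 1 1 = 0) :
    RingQuot (QuadRel k B) →ₐ[k] Tr k L :=
  RingQuot.liftAlgHom k ⟨Tr.ev L, by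
    rintro x y ⟨⟩
    rw [map_zero, ev_quad]
    ext <;> simp [h]⟩

@[simp] theorem qev_mk (L : Matrix (Fin 2) (Fin 2) k)
    (h : B 0 0 * L 0 0 + B 0 1 * L 0 1 + B 1 0 * L 1 0 + B 1 1 * L 1 1 = 0)
    (x : FreeAlgebra k Bool) :
    qev B L h (RingQuot.mkAlgHom k (QuadRel k B) x) = Tr.ev L x :=
  RingQuot.liftAlgHom_mkAlgHom_apply k (Tr.ev L) _ x

theorem quot_indep (a b c : k)
    (h : a • RingQuot.mkAlgHom k (QuadRel k B) (FreeAlgebra.ι k false)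
        + b • RingQuot.mkAlgHom k (QuadRel k B) (FreeAlgebra.ι k true)
        + algebraMap k _ c = 0) : a = 0 ∧ b = 0 ∧ c = 0 := by
  have h0 : B 0 0 * (0:Matrix (Fin 2) (Fin 2) k) 0 0 + B 0 1 * (0:Matrix (Fin 2) (Fin 2) k) 0 1
      + B 1 0 * (0:Matrix (Fin 2) (Fin 2) k) 1 0 + B 1 1 * (0:Matrix (Fin 2) (Fin 2) k) 1 1 = 0 := by
    simp
  have := congrArg (qev B 0 h0) h
  simp only [map_add, map_smul, qev_mk, Tr.ev_ι, AlgHom.commutes, map_zero] at this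
  refine ⟨?_, ?_, ?_⟩
  · have := congrArg Tr.b this; simpa [Tr.gen, Tr.algebraMap_apply] using this
  · have := congrArg Tr.c this; simpa [Tr.gen, Tr.algebraMap_apply] using this
  · have := congrArg Tr.a this; simpa [Tr.gen, Tr.algebraMap_apply] using this

end

section
variable {k : Type*} [Field k]

theorem quot_extract {B E : Matrix (Fin 2) (Fin 2) k} (hB : B ≠ 0)
    (h : RingQuot.mkAlgHom k (QuadRel k B) (quadRelElt E) = 0) :
    ∃ μ : k, E = μ • B := by
  obtain ⟨p, q, hpq⟩ : ∃ p q, B p q ≠ 0 := by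
    by_contra hc
    push_neg at hc
    exact hB (by ext i j; simpa using hc i j)
  refine ⟨E p q / B p q, ?_⟩
  ext i j
  set L : Matrix (Fin 2) (Fin 2) k := Matrix.of fun i' j' =>
    B p q * (if i' = i ∧ j' = j then 1 else 0) - B i j * (if i' = p ∧ j' = q then 1 else 0)
    with hLdef
  have hsum : ∀ F : Matrix (Fin 2) (Fin 2) k,
      F 0 0 * L 0 0 + F 0 1 * L 0 1 + F 1 0 * L 1 0 + F 1 1 * L 1 1
        = B p q * F i j - B i j * F p q := by
    intro F
    fin_cases i <;> fin_cases j <;> fin_cases p <;> fin_cases q <;>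
      simp [hLdef, Matrix.of_apply] <;> ring
  have hL : B 0 0 * L 0 0 + B 0 1 * L 0 1 + B 1 0 * L 1 0 + B 1 1 * L 1 1 = 0 := by
    rw [hsum]; ring
  have h2 := congrArg (qev B L hL) h
  rw [map_zero, qev_mk, ev_quad] at h2
  have h3 := congrArg Tr.d h2
  simp only [Tr.zero_d] at h3
  rw [hsum] at h3
  have h4 : B p q * E i j = B i j * E p q := sub_eq_zero.mp h3
  simp only [Matrix.smul_apply, smul_eq_mul]
  field_simp
  linear_combination h4

end

section
variable {k : Type*} [CommRing k]

/-- the substitution endomorphism of the free algebra attached to a matrix `C` -/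
noncomputable def subst (C : Matrix (Fin 2) (Fin 2) k) :
    FreeAlgebra k Bool →ₐ[k] FreeAlgebra k Bool :=
  FreeAlgebra.lift k fun s => match s with
    | false => C 0 0 • FreeAlgebra.ι k false + C 0 1 • FreeAlgebra.ι k true
    | true => C 1 0 • FreeAlgebra.ι k false + C 1 1 • FreeAlgebra.ι k true

@[simp] theorem subst_false (C : Matrix (Fin 2) (Fin 2) k) :
    subst C (FreeAlgebra.ι k false)
      = C 0 0 • FreeAlgebra.ι k false + C 0 1 • FreeAlgebra.ι k true := by
  simp [subst]

@[simp] theorem subst_true (C : Matrix (Fin 2) (Fin 2) k) :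
    subst C (FreeAlgebra.ι k true)
      = C 1 0 • FreeAlgebra.ι k false + C 1 1 • FreeAlgebra.ι k true := by
  simp [subst]

theorem subst_quad (C B : Matrix (Fin 2) (Fin 2) k) :
    subst C (quadRelElt B) = quadRelElt (C.transpose * B * C) := by
  simp only [quad_eq, map_add, map_smul, map_mul, subst_false, subst_true,
    Matrix.mul_apply, Matrix.transpose_apply, Fin.sum_univ_two, mul_add, add_mul,
    smul_mul_assoc, mul_smul_comm, smul_smul, smul_add, add_smul]
  module

/-- the induced map between the quotient algebras -/
noncomputable def qmap (C B B' : Matrix (Fin 2) (Fin 2) k)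
    (hrel : C.transpose * B * C = B') :
    RingQuot (QuadRel k B) →ₐ[k] RingQuot (QuadRel k B') :=
  RingQuot.liftAlgHom k ⟨(RingQuot.mkAlgHom k (QuadRel k B')).comp (subst C), by
    rintro x y ⟨⟩
    simp [subst_quad, hrel, quot_rel]⟩

@[simp] theorem qmap_mk (C B B' : Matrix (Fin 2) (Fin 2) k)
    (hrel : C.transpose * B * C = B') (x : FreeAlgebra k Bool) :
    qmap C B B' hrel (RingQuot.mkAlgHom k (QuadRel k B) x)
      = RingQuot.mkAlgHom k (QuadRel k B') (subst C x) :=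
  RingQuot.liftAlgHom_mkAlgHom_apply k _ _ x

end

section
variable {k : Type*} [Field k]

theorem backward_dir (B C : Matrix (Fin 2) (Fin 2) k) (hC : IsUnit C) :
    ∃ φ : RingQuot (QuadRel k B) ≃ₐ[k] RingQuot (QuadRel k (C.transpose * B * C)),
      Submodule.map (φ.toLinearMap : RingQuot (QuadRel k B) →ₗ[k]
          RingQuot (QuadRel k (C.transpose * B * C)))
        (Submodule.span k
          {RingQuot.mkAlgHom k (QuadRel k B) (FreeAlgebra.ι k false),
           RingQuot.mkAlgHom k (QuadRel k B) (FreeAlgebra.ι k true)}) =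
      Submodule.span k
        {RingQuot.mkAlgHom k (QuadRel k (C.transpose * B * C)) (FreeAlgebra.ι k false),
         RingQuot.mkAlgHom k (QuadRel k (C.transpose * B * C)) (FreeAlgebra.ι k true)} := by
  have hdet : IsUnit C.det := (Matrix.isUnit_iff_isUnit_det C).mp hC
  set D := C⁻¹ with hDdef
  have hCD : C * D = 1 := Matrix.mul_nonsing_inv C hdet
  have hDC : D * C = 1 := Matrix.nonsing_inv_mul C hdet
  set B' := C.transpose * B * C with hB'def
  have hrel2 : D.transpose * B' * D = B := by
    have h1 : D.transpose * (C.transpose * B * C) * D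
        = (C * D).transpose * (B * (C * D)) := by
      rw [Matrix.transpose_mul]
      simp only [Matrix.mul_assoc]
    rw [hB'def, h1, hCD]
    simp [Matrix.mul_assoc]
  -- entry identities
  have eCD : ∀ i j : Fin 2, C i 0 * D 0 j + C i 1 * D 1 j = (1 : Matrix (Fin 2) (Fin 2) k) i j := by
    intro i j
    have := congrFun (congrFun hCD i) j
    simpa [Matrix.mul_apply, Fin.sum_univ_two] using this
  have eDC : ∀ i j : Fin 2, D i 0 * C 0 j + D i 1 * C 1 j = (1 : Matrix (Fin 2) (Fin 2) k) i j := by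
    intro i j
    have := congrFun (congrFun hDC i) j
    simpa [Matrix.mul_apply, Fin.sum_univ_two] using this
  have eCD00 : C 0 0 * D 0 0 + C 0 1 * D 1 0 = 1 := by simpa [Matrix.one_apply] using eCD 0 0
  have eCD01 : C 0 0 * D 0 1 + C 0 1 * D 1 1 = 0 := by simpa [Matrix.one_apply] using eCD 0 1
  have eCD10 : C 1 0 * D 0 0 + C 1 1 * D 1 0 = 0 := by simpa [Matrix.one_apply] using eCD 1 0
  have eCD11 : C 1 0 * D 0 1 + C 1 1 * D 1 1 = 1 := by simpa [Matrix.one_apply] using eCD 1 1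
  have eDC00 : D 0 0 * C 0 0 + D 0 1 * C 1 0 = 1 := by simpa [Matrix.one_apply] using eDC 0 0
  have eDC01 : D 0 0 * C 0 1 + D 0 1 * C 1 1 = 0 := by simpa [Matrix.one_apply] using eDC 0 1
  have eDC10 : D 1 0 * C 0 0 + D 1 1 * C 1 0 = 0 := by simpa [Matrix.one_apply] using eDC 1 0
  have eDC11 : D 1 0 * C 0 1 + D 1 1 * C 1 1 = 1 := by simpa [Matrix.one_apply] using eDC 1 1
  have idbwd : (qmap D B' B hrel2).comp (qmap C B B' hB'def.symm) = AlgHom.id k _ := by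
    apply RingQuot.ringQuot_ext'
    apply FreeAlgebra.hom_ext
    funext s
    cases s <;>
      simp only [Function.comp_apply, AlgHom.comp_apply, AlgHom.id_apply, qmap_mk,
        subst_false, subst_true, map_add, map_smul, smul_add, smul_smul] <;>
      · match_scalars <;>
          first
            | linear_combination eCD00 | linear_combination eCD01
            | linear_combination eCD10 | linear_combination eCD11
            | linear_combination eDC00 | linear_combination eDC01
            | linear_combination eDC10 | linear_combination eDC11
            | ring
  have idfwd : (qmap C B B' hB'def.symm).comp (qmap D B' B hrel2) = AlgHom.id k _ := by
    apply RingQuot.ringQuot_ext'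
    apply FreeAlgebra.hom_ext
    funext s
    cases s <;>
      simp only [Function.comp_apply, AlgHom.comp_apply, AlgHom.id_apply, qmap_mk,
        subst_false, subst_true, map_add, map_smul, smul_add, smul_smul] <;>
      · match_scalars <;>
          first
            | linear_combination eCD00 | linear_combination eCD01
            | linear_combination eCD10 | linear_combination eCD11
            | linear_combination eDC00 | linear_combination eDC01
            | linear_combination eDC10 | linear_combination eDC11
            | ring
  refine ⟨AlgEquiv.ofAlgHom (qmap C B B' hB'def.symm) (qmap D B' B hrel2) idfwd idbwd, ?_⟩
  have hφ : ∀ x, (AlgEquiv.ofAlgHom (qmap C B B' hB'def.symm) (qmap D B' B hrel2) idfwd idbwd)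
      x = qmap C B B' hB'def.symm x := fun _ => rfl
  apply le_antisymm
  · rw [Submodule.map_span, Set.image_insert_eq, Set.image_singleton]
    apply Submodule.span_le.mpr
    rintro w (rfl | rfl)
    · rw [AlgEquiv.toLinearMap_apply, hφ, qmap_mk, subst_false, map_add, map_smul, map_smul]
      exact Submodule.add_mem _
        (Submodule.smul_mem _ _ (Submodule.subset_span (Set.mem_insert _ _)))
        (Submodule.smul_mem _ _ (Submodule.subset_span (Set.mem_insert_of_mem _ rfl)))
    · rw [AlgEquiv.toLinearMap_apply, hφ, qmap_mk, subst_true, map_add, map_smul, map_smul]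
      exact Submodule.add_mem _
        (Submodule.smul_mem _ _ (Submodule.subset_span (Set.mem_insert _ _)))
        (Submodule.smul_mem _ _ (Submodule.subset_span (Set.mem_insert_of_mem _ rfl)))
  · apply Submodule.span_le.mpr
    rintro w (rfl | rfl)
    · refine ⟨D 0 0 • RingQuot.mkAlgHom k (QuadRel k B) (FreeAlgebra.ι k false)
          + D 0 1 • RingQuot.mkAlgHom k (QuadRel k B) (FreeAlgebra.ι k true),
        Submodule.mem_span_pair.mpr ⟨D 0 0, D 0 1, rfl⟩, ?_⟩
      rw [AlgEquiv.toLinearMap_apply, hφ]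
      simp only [map_add, map_smul, qmap_mk, subst_false, subst_true, smul_add, smul_smul]
      match_scalars
      · linear_combination eDC00
      · linear_combination eDC01
    · refine ⟨D 1 0 • RingQuot.mkAlgHom k (QuadRel k B) (FreeAlgebra.ι k false)
          + D 1 1 • RingQuot.mkAlgHom k (QuadRel k B) (FreeAlgebra.ι k true),
        Submodule.mem_span_pair.mpr ⟨D 1 0, D 1 1, rfl⟩, ?_⟩
      rw [AlgEquiv.toLinearMap_apply, hφ]
      simp only [map_add, map_smul, qmap_mk, subst_false, subst_true, smul_add, smul_smul]
      match_scalars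
      · linear_combination eDC10
      · linear_combination eDC11

end

section
variable {k : Type*} [Field k] [IsAlgClosed k]

theorem forward_dir (B B' : Matrix (Fin 2) (Fin 2) k) (hB : B ≠ 0) (hB' : B' ≠ 0)
    (φ : RingQuot (QuadRel k B) ≃ₐ[k] RingQuot (QuadRel k B'))
    (hφ : Submodule.map (φ.toLinearMap : RingQuot (QuadRel k B) →ₗ[k]
            RingQuot (QuadRel k B'))
          (Submodule.span k
            {RingQuot.mkAlgHom k (QuadRel k B) (FreeAlgebra.ι k false),
             RingQuot.mkAlgHom k (QuadRel k B) (FreeAlgebra.ι k true)}) =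
        Submodule.span k
          {RingQuot.mkAlgHom k (QuadRel k B') (FreeAlgebra.ι k false),
           RingQuot.mkAlgHom k (QuadRel k B') (FreeAlgebra.ι k true)}) :
    ∃ C : Matrix (Fin 2) (Fin 2) k, IsUnit C ∧ B' = C.transpose * B * C := by
  set XB := RingQuot.mkAlgHom k (QuadRel k B) (FreeAlgebra.ι k false) with hXB
  set YB := RingQuot.mkAlgHom k (QuadRel k B) (FreeAlgebra.ι k true) with hYB
  set XB' := RingQuot.mkAlgHom k (QuadRel k B') (FreeAlgebra.ι k false) with hXB'
  set YB' := RingQuot.mkAlgHom k (QuadRel k B') (FreeAlgebra.ι k true) with hYB'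
  -- coefficients of φ on degree one
  have hx : φ XB ∈ Submodule.span k {XB', YB'} := by
    rw [← hφ]
    exact Submodule.mem_map_of_mem (Submodule.subset_span (Set.mem_insert _ _))
  have hy : φ YB ∈ Submodule.span k {XB', YB'} := by
    rw [← hφ]
    exact Submodule.mem_map_of_mem (Submodule.subset_span (Set.mem_insert_of_mem _ rfl))
  obtain ⟨c00, c01, hc0⟩ := Submodule.mem_span_pair.mp hx
  obtain ⟨c10, c11, hc1⟩ := Submodule.mem_span_pair.mp hy
  set C : Matrix (Fin 2) (Fin 2) k := !![c00, c01; c10, c11] with hCdef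
  have hC00 : C 0 0 = c00 := by simp [hCdef]
  have hC01 : C 0 1 = c01 := by simp [hCdef]
  have hC10 : C 1 0 = c10 := by simp [hCdef]
  have hC11 : C 1 1 = c11 := by simp [hCdef]
  -- the key relation
  have expand : φ (RingQuot.mkAlgHom k (QuadRel k B) (quadRelElt B))
      = RingQuot.mkAlgHom k (QuadRel k B') (quadRelElt (C.transpose * B * C)) := by
    conv_lhs => rw [quad_eq]
    conv_rhs => rw [quad_eq]
    simp only [map_add, map_smul, map_mul, ← hXB, ← hYB, ← hc0, ← hc1,
      Matrix.mul_apply, Matrix.transpose_apply, Fin.sum_univ_two,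
      hC00, hC01, hC10, hC11,
      mul_add, add_mul, smul_mul_assoc, mul_smul_comm, smul_smul, smul_add, add_smul]
    module
  have key : RingQuot.mkAlgHom k (QuadRel k B') (quadRelElt (C.transpose * B * C)) = 0 := by
    rw [← expand, quot_rel, map_zero]
  obtain ⟨μ, hμ⟩ := quot_extract hB' key
  -- independence helper in A(B')
  have indep : ∀ a b : k, a • XB' + b • YB' = 0 → a = 0 ∧ b = 0 := by
    intro a b hab
    have := quot_indep B' a b 0 (by simpa using hab)
    exact ⟨this.1, this.2.1⟩
  have indep2 : ∀ a b a' b' : k, a • XB' + b • YB' = a' • XB' + b' • YB' →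
      a = a' ∧ b = b' := by
    intro a b a' b' hab
    have h0 : (a - a') • XB' + (b - b') • YB' = 0 := by
      linear_combination (norm := module) hab
    obtain ⟨h1, h2⟩ := indep _ _ h0
    constructor <;> [linear_combination h1; linear_combination h2]
  -- a left inverse for C
  have hx' : XB' ∈ Submodule.map (φ.toLinearMap : RingQuot (QuadRel k B) →ₗ[k]
      RingQuot (QuadRel k B')) (Submodule.span k {XB, YB}) := by
    rw [hφ]; exact Submodule.subset_span (Set.mem_insert _ _)
  have hy' : YB' ∈ Submodule.map (φ.toLinearMap : RingQuot (QuadRel k B) →ₗ[k]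
      RingQuot (QuadRel k B')) (Submodule.span k {XB, YB}) := by
    rw [hφ]; exact Submodule.subset_span (Set.mem_insert_of_mem _ rfl)
  obtain ⟨u, hu, hux⟩ := hx'
  obtain ⟨v, hv, hvy⟩ := hy'
  obtain ⟨d00, d01, hd0⟩ := Submodule.mem_span_pair.mp hu
  obtain ⟨d10, d11, hd1⟩ := Submodule.mem_span_pair.mp hv
  rw [AlgEquiv.toLinearMap_apply] at hux hvy
  rw [← hd0] at hux
  rw [← hd1] at hvy
  rw [map_add, map_smul, map_smul, ← hc0, ← hc1] at hux hvy
  have e0 : (d00 * c00 + d01 * c10) • XB' + (d00 * c01 + d01 * c11) • YB'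
      = (1 : k) • XB' + (0 : k) • YB' := by
    linear_combination (norm := module) hux
  have e1 : (d10 * c00 + d11 * c10) • XB' + (d10 * c01 + d11 * c11) • YB'
      = (0 : k) • XB' + (1 : k) • YB' := by
    linear_combination (norm := module) hvy
  obtain ⟨e00, e01⟩ := indep2 _ _ _ _ e0
  obtain ⟨e10, e11⟩ := indep2 _ _ _ _ e1
  set D : Matrix (Fin 2) (Fin 2) k := !![d00, d01; d10, d11] with hDdef
  have hD00 : D 0 0 = d00 := by simp [hDdef]
  have hD01 : D 0 1 = d01 := by simp [hDdef]
  have hD10 : D 1 0 = d10 := by simp [hDdef]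
  have hD11 : D 1 1 = d11 := by simp [hDdef]
  have hDC : D * C = 1 := by
    ext i j
    fin_cases i <;> fin_cases j <;>
      simp [hDdef, hCdef, Matrix.mul_apply, Fin.sum_univ_two, Matrix.one_apply] <;>
      first
        | linear_combination e00 | linear_combination e01
        | linear_combination e10 | linear_combination e11
  have hC : IsUnit C := (Matrix.isUnit_iff_isUnit_det C).mpr (Matrix.isUnit_det_of_left_inverse hDC)
  have hdet : IsUnit C.det := (Matrix.isUnit_iff_isUnit_det C).mp hC
  have hdetT : IsUnit C.transpose.det := by simpa [Matrix.det_transpose] using hdet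
  -- recover B
  have hrecover : C.transpose⁻¹ * (C.transpose * B * C) * C⁻¹ = B := by
    calc C.transpose⁻¹ * (C.transpose * B * C) * C⁻¹
        = (C.transpose⁻¹ * C.transpose) * (B * (C * C⁻¹)) := by
          simp only [Matrix.mul_assoc]
      _ = B := by
          rw [Matrix.nonsing_inv_mul _ hdetT, Matrix.mul_nonsing_inv _ hdet,
            Matrix.one_mul, Matrix.mul_one]
  have hμ0 : μ ≠ 0 := by
    rintro rfl
    rw [zero_smul] at hμ
    rw [hμ] at hrecover
    apply hB
    rw [← hrecover]
    simp
  obtain ⟨s, hs⟩ := IsAlgClosed.exists_pow_nat_eq (μ⁻¹ : k) (n := 2) two_pos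
  have hs0 : s ≠ 0 := by
    rintro rfl
    rw [zero_pow (by norm_num)] at hs
    exact hμ0 (by simpa using (inv_eq_zero.mp hs.symm))
  refine ⟨s • C, ?_, ?_⟩
  · rw [Matrix.isUnit_iff_isUnit_det, Matrix.det_smul]
    exact (IsUnit.mk0 _ (pow_ne_zero _ hs0)).mul hdet
  · rw [Matrix.transpose_smul, Matrix.smul_mul, Matrix.smul_mul, Matrix.mul_smul,
      hμ, smul_smul, smul_smul]
    rw [show s * s * μ = s ^ 2 * μ by ring, hs, inv_mul_cancel₀ hμ0, one_smul]

end

/-- Over an algebraically closed field `k`: (a) every nonzero homogeneous element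
`f ∈ k⟨x,y⟩` of degree `2` can be written uniquely as `f = x·τ(x) + y·τ(y)` for a
(necessarily nonzero) linear map `τ`, encoded by its matrix `B`; and (b) the
algebras `A(τ) = k⟨x,y⟩/(x·τ(x)+y·τ(y))` and `A(τ')` are isomorphic as graded
algebras (i.e. by a `k`-algebra isomorphism carrying the degree-one part onto the
degree-one part) if and only if the matrices `B`, `B'` of `τ`, `τ'` are congruent:
`B' = Cᵀ·B·C` for some invertible `C`. -/
theorem stmt_19 {k : Type*} [Field k] [IsAlgClosed k] :
    (∀ f : FreeAlgebra k Bool,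
      f ∈ Submodule.span k {w : FreeAlgebra k Bool | ∃ s t : Bool,
        w = FreeAlgebra.ι k s * FreeAlgebra.ι k t} →
      f ≠ 0 →
      (∃! B : Matrix (Fin 2) (Fin 2) k, quadRelElt B = f) ∧
      (∀ B : Matrix (Fin 2) (Fin 2) k, quadRelElt B = f → B ≠ 0)) ∧
    (∀ B B' : Matrix (Fin 2) (Fin 2) k, B ≠ 0 → B' ≠ 0 →
      ((∃ φ : RingQuot (QuadRel k B) ≃ₐ[k] RingQuot (QuadRel k B'),
          Submodule.map (φ.toLinearMap : RingQuot (QuadRel k B) →ₗ[k]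
              RingQuot (QuadRel k B'))
            (Submodule.span k
              {RingQuot.mkAlgHom k (QuadRel k B) (FreeAlgebra.ι k false),
               RingQuot.mkAlgHom k (QuadRel k B) (FreeAlgebra.ι k true)}) =
          Submodule.span k
            {RingQuot.mkAlgHom k (QuadRel k B') (FreeAlgebra.ι k false),
             RingQuot.mkAlgHom k (QuadRel k B') (FreeAlgebra.ι k true)}) ↔
        ∃ C : Matrix (Fin 2) (Fin 2) k, IsUnit C ∧ B' = C.transpose * B * C)) := by
  constructor
  · intro f hf hf0
    obtain ⟨B, hB⟩ := exists_quad hf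
    constructor
    · exact ⟨B, hB, fun B'' h'' => quad_inj (h''.trans hB.symm)⟩
    · intro B0 hB0 h0
      apply hf0
      rw [← hB0, h0, quad_zero]
  · intro B B' hB hB'
    constructor
    · rintro ⟨φ, hφ⟩
      exact forward_dir B B' hB hB' φ hφ
    · rintro ⟨C, hC, rfl⟩
      exact backward_dir B C hC
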